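/- For all quaternions α, β, x and all real numbers a, v, w, E with v > 0, w ≥ 0 and E ≥ 0, one has (4v + w)·‖α‖² − 4a·Re((star x) * α * i) − 2w·Re((star x) * α * i * β) + ‖x‖²·(w·‖β‖² + E + a²/v) = ‖2√v·(α*i) − (a/√v)·x‖² + w·‖α*i − x*(star β)‖² + E·‖x‖², and in particular this expression is nonnegative. -/

import Mathlib

/-- The standard imaginary unit `i` of the real quaternions. -/
def Quaternion.I : Quaternion ℝ := ⟨0, 1, 0, 0⟩

/-- The sum-of-squares identity showing that the symmetric tensor
`f*g = (4v+w) Re dx⊗dx̄ − Re(x̄ dx i ⊙ (2ξ+η)) + |x|²(g̃ + v⁻¹ξ²)` is nonnegative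
at every point of `ℍ* × P` (Theorem `Thm_HKmanifold` of the paper). -/
theorem sum_of_squares_identity (α β x : Quaternion ℝ) (a v w E : ℝ)
    (hv : 0 < v) (hw : 0 ≤ w) (hE : 0 ≤ E) :
    (4 * v + w) * ‖α‖ ^ 2 - 4 * a * (star x * α * Quaternion.I).re
        - 2 * w * (star x * α * Quaternion.I * β).re
        + ‖x‖ ^ 2 * (w * ‖β‖ ^ 2 + E + a ^ 2 / v)
      = ‖(2 * Real.sqrt v) • (α * Quaternion.I) - (a / Real.sqrt v) • x‖ ^ 2
        + w * ‖α * Quaternion.I - x * star β‖ ^ 2 + E * ‖x‖ ^ 2 ∧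
    0 ≤ (4 * v + w) * ‖α‖ ^ 2 - 4 * a * (star x * α * Quaternion.I).re
        - 2 * w * (star x * α * Quaternion.I * β).re
        + ‖x‖ ^ 2 * (w * ‖β‖ ^ 2 + E + a ^ 2 / v) := by
  have key : (4 * v + w) * ‖α‖ ^ 2 - 4 * a * (star x * α * Quaternion.I).re
        - 2 * w * (star x * α * Quaternion.I * β).re
        + ‖x‖ ^ 2 * (w * ‖β‖ ^ 2 + E + a ^ 2 / v)
      = ‖(2 * Real.sqrt v) • (α * Quaternion.I) - (a / Real.sqrt v) • x‖ ^ 2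
        + w * ‖α * Quaternion.I - x * star β‖ ^ 2 + E * ‖x‖ ^ 2 := by
    obtain ⟨s, hs0, rfl⟩ : ∃ s, 0 < s ∧ v = s ^ 2 :=
      ⟨Real.sqrt v, Real.sqrt_pos.2 hv, (Real.sq_sqrt hv.le).symm⟩
    rw [Real.sqrt_sq hs0.le]
    have hn : ∀ q : Quaternion ℝ, ‖q‖ ^ 2 = Quaternion.normSq q := fun q => by
      rw [sq, ← Quaternion.normSq_eq_norm_mul_self]
    simp only [hn]
    have hI0 : Quaternion.I.re = 0 := rfl
    have hI1 : Quaternion.I.imI = 1 := rfl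
    have hI2 : Quaternion.I.imJ = 0 := rfl
    have hI3 : Quaternion.I.imK = 0 := rfl
    simp only [Quaternion.normSq_def', hI0, hI1, hI2, hI3, Quaternion.re_mul,
      Quaternion.imI_mul, Quaternion.imJ_mul, Quaternion.imK_mul,
      Quaternion.re_sub, Quaternion.imI_sub, Quaternion.imJ_sub, Quaternion.imK_sub,
      Quaternion.re_smul, Quaternion.imI_smul, Quaternion.imJ_smul, Quaternion.imK_smul,
      Quaternion.re_star, Quaternion.imI_star, Quaternion.imJ_star, Quaternion.imK_star,
      smul_eq_mul]
    field_simp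
    ring
  refine ⟨key, key ▸ ?_⟩
  positivity
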